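/- Let M, N be symmetric positive definite and suppose the full bidiagonalization relations hold: A Q = M V [B; 0], Vᵀ M V = I_m, Qᵀ N Q = I_n with B invertible upper bidiagonal and Qᵀ b = β₁ e₁. Then the GKB solution u = V_n z (with z solving Bᵀ z = β₁ e₁) and p = −Q B⁻¹ z solve the augmented system M u + A p = 0, Aᵀ u = b exactly after n steps (finite termination). -/

import Mathlib

open Matrix

/-- Rows of the m-dimensional space are indexed by `Fin n ⊕ Fin k` (so `m = n + k ≥ n`). -/
theorem stmt_19 {n k : ℕ} [NeZero n]
    (M : Matrix (Fin n ⊕ Fin k) (Fin n ⊕ Fin k) ℝ)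
    (A : Matrix (Fin n ⊕ Fin k) (Fin n) ℝ)
    (N B : Matrix (Fin n) (Fin n) ℝ)
    (V : Matrix (Fin n ⊕ Fin k) (Fin n ⊕ Fin k) ℝ)
    (Q : Matrix (Fin n) (Fin n) ℝ)
    (b : Fin n → ℝ) (β₁ : ℝ)
    (hM : M.PosDef) (hN : N.PosDef) (hA : A.rank = n)
    (hbidiag : ∀ i j : Fin n, (j : ℕ) ≠ i → (j : ℕ) ≠ i + 1 → B i j = 0)
    (hB : IsUnit B)
    (hAQ : A * Q = M * V * Matrix.fromRows B (0 : Matrix (Fin k) (Fin n) ℝ))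
    (hAV : Aᵀ * V = N * Q * Matrix.fromCols Bᵀ (0 : Matrix (Fin n) (Fin k) ℝ))
    (hV : Vᵀ * M * V = 1) (hQ : Qᵀ * N * Q = 1)
    (hQb : Qᵀ *ᵥ b = β₁ • (Pi.single (0 : Fin n) (1 : ℝ) : Fin n → ℝ))
    (z : Fin n → ℝ)
    (hz : Bᵀ *ᵥ z = β₁ • (Pi.single (0 : Fin n) (1 : ℝ) : Fin n → ℝ))
    (u : Fin n ⊕ Fin k → ℝ) (p : Fin n → ℝ)
    (hu : u = (Matrix.of fun i (j : Fin n) => V i (Sum.inl j)) *ᵥ z)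
    (hp : p = -((Q * B⁻¹) *ᵥ z)) :
    M *ᵥ u + A *ᵥ p = 0 ∧ Aᵀ *ᵥ u = b := by
  have hBinv : B * B⁻¹ = 1 := Matrix.mul_nonsing_inv B ((Matrix.isUnit_iff_isUnit_det B).mp hB)
  have hu' : u = V *ᵥ Sum.elim z (0 : Fin k → ℝ) := by
    rw [hu]
    funext i
    simp [Matrix.mulVec, dotProduct, Fintype.sum_sum_type]
  have key : A *ᵥ p = -(M *ᵥ u) := by
    rw [hp, hu', Matrix.mulVec_neg, neg_inj, Matrix.mulVec_mulVec, Matrix.mulVec_mulVec,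
      ← Matrix.mul_assoc, hAQ, Matrix.mul_assoc (M * V), Matrix.fromRows_mul, hBinv,
      Matrix.zero_mul, ← Matrix.mulVec_mulVec]
    congr 1
    rw [Matrix.fromRows_mulVec]
    simp
  refine ⟨by rw [key]; abel, ?_⟩
  have hQQ : N * Q * Qᵀ = 1 := by
    have h1 : Qᵀ * (N * Q) = 1 := by rw [← Matrix.mul_assoc]; exact hQ
    have := mul_eq_one_comm.mp h1
    exact this
  rw [hu', Matrix.mulVec_mulVec, hAV, ← Matrix.mulVec_mulVec,
    Matrix.fromCols_mulVec_sumElim, Matrix.mulVec_zero, add_zero, hz, ← hQb,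
    Matrix.mulVec_mulVec, hQQ, Matrix.one_mulVec]
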